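/- Let V be a finite-dimensional real inner product space, μ ∈ V, U a subspace of V, and r = P_U μ − μ the residual of orthogonal projection. Let v ∈ V with ⟨v, r⟩ ≠ 0, and let U' = U + span{v}. Then ‖μ − P_{U'} μ‖² ≤ ‖μ − P_U μ‖² − ⟨v, r⟩² / ‖v‖². -/

import Mathlib

open RealInnerProductSpace

lemma proj_min_aux {V : Type*} [NormedAddCommGroup V] [InnerProductSpace ℝ V]
    [FiniteDimensional ℝ V] (μ : V) (K : Submodule ℝ V) (w : V) (hw : w ∈ K) :
    ‖μ - (Submodule.orthogonalProjectionOnto K μ : V)‖ ≤ ‖μ - w‖ := by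
  rw [← Submodule.starProjection_apply, Submodule.starProjection_minimal]
  exact ciInf_le (⟨0, Set.forall_mem_range.2 fun _ => norm_nonneg _⟩ :
    BddBelow (Set.range fun x : K => ‖μ - x‖)) ⟨w, hw⟩

/-- Adding a direction correlated with the residual decreases the squared
reconstruction error by at least ⟪v,r⟫² / ‖v‖². -/
theorem stmt_7 {V : Type*} [NormedAddCommGroup V] [InnerProductSpace ℝ V]
    [FiniteDimensional ℝ V] (μ : V) (U : Submodule ℝ V)
    (r : V) (hr : r = (Submodule.orthogonalProjectionOnto U μ : V) - μ)
    (v : V) (hv : ⟪v, r⟫ ≠ 0) :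
    ‖μ - (Submodule.orthogonalProjectionOnto (U ⊔ Submodule.span ℝ {v}) μ : V)‖ ^ 2 ≤
      ‖μ - (Submodule.orthogonalProjectionOnto U μ : V)‖ ^ 2 - ⟪v, r⟫ ^ 2 / ‖v‖ ^ 2 := by
  set p : V := (Submodule.orthogonalProjectionOnto U μ : V) with hp
  set s : V := μ - p with hs
  have hsU : s ∈ Uᗮ := by
    have := Submodule.sub_starProjection_mem_orthogonal (K := U) μ; rwa [Submodule.starProjection_apply] at this
  have hrs : r = -s := by rw [hr, hs]; abel
  set b : V := v - (Submodule.orthogonalProjectionOnto U v : V) with hb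
  have hbU : b ∈ Uᗮ := by
    have := Submodule.sub_starProjection_mem_orthogonal (K := U) v; rwa [Submodule.starProjection_apply] at this
  -- inner products with projections onto U vanish against r
  have hPvr : ⟪(Submodule.orthogonalProjectionOnto U v : V), s⟫ = 0 :=
    hsU _ (Submodule.orthogonalProjectionOnto U v).2
  have hbs : ⟪b, s⟫ = ⟪v, s⟫ := by
    rw [hb, inner_sub_left, hPvr, sub_zero]
  have hvs : ⟪v, s⟫ = -⟪v, r⟫ := by rw [hrs, inner_neg_right, neg_neg]
  have hbne : b ≠ 0 := by
    intro h
    apply hv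
    have : ⟪v, s⟫ = 0 := by rw [← hbs, h, inner_zero_left]
    rw [hvs] at this; linarith
  have hbpos : (0:ℝ) < ‖b‖ ^ 2 := pow_pos (norm_pos_iff.2 hbne) 2
  have hbv : ‖b‖ ≤ ‖v‖ := by
    simpa [hb] using proj_min_aux v U 0 U.zero_mem |>.trans_eq (by simp) |>.trans_eq rfl
  set c : ℝ := ⟪v, r⟫ with hc
  set t : ℝ := -c / ‖b‖ ^ 2 with ht
  set w : V := p + t • b with hw
  have hwU' : w ∈ U ⊔ Submodule.span ℝ {v} := by
    apply Submodule.add_mem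
    · exact Submodule.mem_sup_left (Submodule.orthogonalProjectionOnto U μ).2
    · apply Submodule.smul_mem
      apply Submodule.sub_mem
      · exact Submodule.mem_sup_right (Submodule.mem_span_singleton_self v)
      · exact Submodule.mem_sup_left (Submodule.orthogonalProjectionOnto U v).2
  have hμw : μ - w = s - t • b := by rw [hw, hs]; abel
  have hwsq : ‖μ - w‖ ^ 2 = ‖s‖ ^ 2 - c ^ 2 / ‖b‖ ^ 2 := by
    rw [hμw, norm_sub_sq_real, real_inner_smul_right, real_inner_comm b s, hbs, hvs,
      norm_smul, mul_pow, Real.norm_eq_abs, sq_abs, ht]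
    field_simp
    ring
  have hle : ‖μ - (Submodule.orthogonalProjectionOnto (U ⊔ Submodule.span ℝ {v}) μ : V)‖ ^ 2 ≤ ‖μ - w‖ ^ 2 := by
    have := proj_min_aux μ (U ⊔ Submodule.span ℝ {v}) w hwU'
    exact pow_le_pow_left₀ (norm_nonneg _) this 2
  have hlast : c ^ 2 / ‖v‖ ^ 2 ≤ c ^ 2 / ‖b‖ ^ 2 := by
    apply div_le_div_of_nonneg_left (by positivity) hbpos
    exact pow_le_pow_left₀ (norm_nonneg _) hbv 2
  calc ‖μ - (Submodule.orthogonalProjectionOnto (U ⊔ Submodule.span ℝ {v}) μ : V)‖ ^ 2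
      ≤ ‖s‖ ^ 2 - c ^ 2 / ‖b‖ ^ 2 := by rw [← hwsq]; exact hle
    _ ≤ ‖s‖ ^ 2 - c ^ 2 / ‖v‖ ^ 2 := by linarith
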